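/- Let $n \ge 2$ and $\sigma_1,\dots,\sigma_n > 0$. There exists a real symmetric positive semidefinite $n \times n$ matrix $\Sigma$ with diagonal entries $\Sigma_{ii} = \sigma_i^2$ and $\sum_{i=1}^n \sum_{j=1}^n \Sigma_{ij} = 0$ if and only if $\sum_{i=1}^n \sigma_i \ge 2 \max_{1 \le i \le n} \sigma_i$. -/

import Mathlib

open Finset Matrix

lemma my_partition {ι : Type*} [DecidableEq ι] (M : ℝ) (hM : 0 ≤ M) (f : ι → ℝ)
    (s : Finset ι) (hf : ∀ i ∈ s, 0 ≤ f i ∧ f i ≤ M) :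
    ∃ ε : ι → ℝ, (∀ i, ε i = 1 ∨ ε i = -1) ∧ |∑ i ∈ s, ε i * f i| ≤ M := by
  classical
  induction s using Finset.induction_on with
  | empty => exact ⟨fun _ => 1, fun _ => Or.inl rfl, by simpa using hM⟩
  | @insert a s ha ih =>
    obtain ⟨ε, hε, hsum⟩ := ih (fun i hi => hf i (Finset.mem_insert_of_mem hi))
    obtain ⟨hfa0, hfaM⟩ := hf a (Finset.mem_insert_self a s)
    set T := ∑ i ∈ s, ε i * f i with hT
    set c : ℝ := if 0 ≤ T then -1 else 1 with hc
    refine ⟨Function.update ε a c, ?_, ?_⟩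
    · intro i
      by_cases h : i = a
      · subst h; rw [Function.update_self]; by_cases h0 : 0 ≤ T <;> simp [hc, h0]
      · rw [Function.update_of_ne h]; exact hε i
    · rw [Finset.sum_insert ha, Function.update_self]
      have hrest : ∑ i ∈ s, Function.update ε a c i * f i = T := by
        apply Finset.sum_congr rfl
        intro i hi
        have hia : i ≠ a := fun h => ha (h ▸ hi)
        rw [Function.update_of_ne hia]
      rw [hrest]
      rw [abs_le] at hsum ⊢
      by_cases h0 : 0 ≤ T
      · rw [hc, if_pos h0]; constructor <;> nlinarith [hsum.1, hsum.2]
      · rw [hc, if_neg h0]; push_neg at h0; constructor <;> nlinarith [hsum.1, hsum.2]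

lemma my_quad (n : ℕ) (v h : Fin n → ℝ) :
    ∑ i, v i * ∑ j, (h i * h j) * v j = (∑ i, v i * h i) ^ 2 := by
  rw [sq, Finset.sum_mul_sum]
  apply Finset.sum_congr rfl
  intro i _
  rw [Finset.mul_sum]
  apply Finset.sum_congr rfl
  intro j _
  ring

set_option maxHeartbeats 2000000 in
/-- There exists a real symmetric PSD matrix with diagonal `σ i ^ 2` and all entries
summing to zero iff `∑ σ i ≥ 2 max σ i`. -/
theorem stmt7 (n : ℕ) (hn : 2 ≤ n) (σ : Fin n → ℝ) (hσ : ∀ i, 0 < σ i) :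
    (∃ S : Matrix (Fin n) (Fin n) ℝ, S.IsSymm ∧ S.PosSemidef ∧
      (∀ i, S i i = σ i ^ 2) ∧ ∑ i, ∑ j, S i j = 0) ↔
    2 * (⨆ i, σ i) ≤ ∑ i, σ i := by
  classical
  have hne : Nonempty (Fin n) := ⟨⟨0, by omega⟩⟩
  obtain ⟨k, hk⟩ := Finite.exists_max σ
  have hsup : (⨆ i, σ i) = σ k :=
    le_antisymm (ciSup_le hk) (le_ciSup (Set.Finite.bddAbove (Set.finite_range σ)) k)
  rw [hsup]
  have hsplit : ∑ i, σ i = σ k + ∑ i ∈ Finset.univ.erase k, σ i :=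
    (Finset.add_sum_erase Finset.univ σ (Finset.mem_univ k)).symm
  constructor
  · rintro ⟨S, hsymm, hpsd, hdiag, hzero⟩
    obtain ⟨B, hB⟩ : ∃ B : Matrix (Fin n) (Fin n) ℝ, S = Bᴴ * B := by
      open scoped MatrixOrder Matrix.Norms.L2Operator in
      exact CStarAlgebra.nonneg_iff_eq_star_mul_self.mp hpsd.nonneg
    have hSentry : ∀ i j, S i j = ∑ l, B l i * B l j := by
      intro i j
      rw [hB, Matrix.mul_apply]
      simp [Matrix.conjTranspose_apply]
    set w : Fin n → EuclideanSpace ℝ (Fin n) := fun i => WithLp.toLp 2 (fun l => B l i) with hw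
    have hnorm : ∀ i, ‖w i‖ = σ i := by
      intro i
      rw [EuclideanSpace.norm_eq]
      have : ∑ l, ‖w i l‖ ^ 2 = σ i ^ 2 := by
        simp only [hw, PiLp.toLp_apply, Real.norm_eq_abs, sq_abs]
        rw [← hdiag i, hSentry i i]
        apply Finset.sum_congr rfl; intro l _; ring
      rw [this, Real.sqrt_sq (hσ i).le]
    have hcol : ∀ l, ∑ i, B l i = 0 := by
      have h2 : ∑ l, (∑ i, B l i) ^ 2 = 0 := by
        have : ∑ l, (∑ i, B l i) ^ 2 = ∑ i, ∑ j, S i j := by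
          calc ∑ l, (∑ i, B l i) ^ 2 = ∑ l, ∑ i, ∑ j, B l i * B l j := by
                apply Finset.sum_congr rfl; intro l _
                rw [sq, Finset.sum_mul_sum]
            _ = ∑ i, ∑ l, ∑ j, B l i * B l j := Finset.sum_comm
            _ = ∑ i, ∑ j, ∑ l, B l i * B l j := by
                apply Finset.sum_congr rfl; intro i _; exact Finset.sum_comm
            _ = ∑ i, ∑ j, S i j := by
                apply Finset.sum_congr rfl; intro i _
                apply Finset.sum_congr rfl; intro j _
                exact (hSentry i j).symm
        rw [this, hzero]
      intro l
      have := (Finset.sum_eq_zero_iff_of_nonneg (fun l _ => sq_nonneg (∑ i, B l i))).mp h2 l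
        (Finset.mem_univ l)
      exact pow_eq_zero_iff (by norm_num) |>.mp this
    have hsum0 : ∑ i, w i = 0 := by
      ext l
      have : (∑ i, w i) l = ∑ i, w i l := by
        rw [WithLp.ofLp_sum]; exact Finset.sum_apply l Finset.univ _
      rw [this]
      simpa [hw] using hcol l
    have hkey : σ k ≤ ∑ i ∈ Finset.univ.erase k, σ i := by
      have hwk : w k = -∑ i ∈ Finset.univ.erase k, w i := by
        have := Finset.add_sum_erase Finset.univ w (Finset.mem_univ k)
        rw [hsum0] at this
        linear_combination (norm := module) this
      calc σ k = ‖w k‖ := (hnorm k).symm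
        _ = ‖∑ i ∈ Finset.univ.erase k, w i‖ := by rw [hwk, norm_neg]
        _ ≤ ∑ i ∈ Finset.univ.erase k, ‖w i‖ := norm_sum_le _ _
        _ = ∑ i ∈ Finset.univ.erase k, σ i := Finset.sum_congr rfl fun i _ => hnorm i
    rw [hsplit]; linarith
  · intro h
    set M := σ k with hMdef
    have hM0 : 0 < M := hσ k
    obtain ⟨ε, hε, hεle⟩ := my_partition M hM0.le σ (Finset.univ.erase k)
      (fun i _ => ⟨(hσ i).le, hk i⟩)
    set a := ∑ i ∈ Finset.univ.erase k, (if ε i = 1 then σ i else 0) with hadef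
    set b := ∑ i ∈ Finset.univ.erase k, (if ε i = 1 then 0 else σ i) with hbdef
    have ha0 : 0 ≤ a := Finset.sum_nonneg fun i _ => by split <;> [exact (hσ i).le; exact le_rfl]
    have hb0 : 0 ≤ b := Finset.sum_nonneg fun i _ => by split <;> [exact le_rfl; exact (hσ i).le]
    have hab : a + b = ∑ i ∈ Finset.univ.erase k, σ i := by
      rw [← Finset.sum_add_distrib]
      apply Finset.sum_congr rfl; intro i _; split <;> ring
    have hdiffeq : a - b = ∑ i ∈ Finset.univ.erase k, ε i * σ i := by
      rw [← Finset.sum_sub_distrib]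
      apply Finset.sum_congr rfl; intro i _
      rcases hε i with h1 | h1 <;> rw [h1] <;> norm_num
    have hdiff : |a - b| ≤ M := by rw [hdiffeq]; exact hεle
    have habM : M ≤ a + b := by rw [hab]; linarith [hsplit, h]
    rw [abs_le] at hdiff
    set x := (b ^ 2 - a ^ 2 - M ^ 2) / (2 * M) with hxdef
    have h2Mx : 2 * M * x = b ^ 2 - a ^ 2 - M ^ 2 := by
      rw [hxdef]; field_simp
    have hx2 : x ^ 2 ≤ a ^ 2 := by
      have key : 0 ≤ (a + M - b) * ((a + M + b) * ((b - a + M) * (b + a - M))) := by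
        apply mul_nonneg (by linarith) (mul_nonneg (by linarith)
          (mul_nonneg (by linarith) (by linarith)))
      have hsq : (2 * M * x) ^ 2 = (b ^ 2 - a ^ 2 - M ^ 2) ^ 2 := by rw [h2Mx]
      nlinarith [key, hsq, mul_pos hM0 hM0]
    set y := Real.sqrt (a ^ 2 - x ^ 2) with hydef
    have hy2 : y ^ 2 = a ^ 2 - x ^ 2 := Real.sq_sqrt (by linarith)
    have hy0' : 0 ≤ y := Real.sqrt_nonneg _
    have hyeq : ∀ c : ℝ, a ^ 2 - x ^ 2 = c → y = Real.sqrt c := fun c hc => by rw [hydef, hc]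
    clear_value M a b x y
    -- direction functions
    set p : Fin n → ℝ := fun i =>
      if i = k then 1 else (if ε i = 1 then x / a else (-M - x) / b) with hpdef
    set q : Fin n → ℝ := fun i =>
      if i = k then 0 else (if ε i = 1 then y / a else -y / b) with hqdef
    set f : Fin n → ℝ := fun i => σ i * p i with hfdef
    set g : Fin n → ℝ := fun i => σ i * q i with hgdef
    clear_value p q f g
    have hapos : ∀ i, i ≠ k → ε i = 1 → 0 < a := by
      intro i hik h1
      have : σ i ≤ a := by
        rw [hadef]
        have hmem : i ∈ Finset.univ.erase k := Finset.mem_erase.mpr ⟨hik, Finset.mem_univ i⟩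
        calc σ i = (if ε i = 1 then σ i else 0) := by rw [if_pos h1]
          _ ≤ _ := Finset.single_le_sum (f := fun j => if ε j = 1 then σ j else 0)
              (fun j _ => by split <;> [exact (hσ j).le; exact le_rfl]) hmem
      linarith [hσ i]
    have hbpos : ∀ i, i ≠ k → ε i ≠ 1 → 0 < b := by
      intro i hik h1
      have : σ i ≤ b := by
        rw [hbdef]
        have hmem : i ∈ Finset.univ.erase k := Finset.mem_erase.mpr ⟨hik, Finset.mem_univ i⟩
        calc σ i = (if ε i = 1 then 0 else σ i) := by rw [if_neg h1]
          _ ≤ _ := Finset.single_le_sum (f := fun j => if ε j = 1 then 0 else σ j)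
              (fun j _ => by split <;> [exact le_rfl; exact (hσ j).le]) hmem
      linarith [hσ i]
    have hunit : ∀ i, p i ^ 2 + q i ^ 2 = 1 := by
      intro i
      by_cases hik : i = k
      · simp [hpdef, hqdef, hik]
      · by_cases h1 : ε i = 1
        · have ha : 0 < a := hapos i hik h1
          simp only [hpdef, hqdef, if_neg hik, if_pos h1]
          field_simp
          linarith [hy2]
        · have hb : 0 < b := hbpos i hik h1
          simp only [hpdef, hqdef, if_neg hik, if_neg h1]
          field_simp
          nlinarith [hy2, h2Mx]
    have hnormsq : ∀ i, f i ^ 2 + g i ^ 2 = σ i ^ 2 := by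
      intro i
      rw [hfdef, hgdef]
      dsimp only
      calc (σ i * p i) ^ 2 + (σ i * q i) ^ 2 = σ i ^ 2 * (p i ^ 2 + q i ^ 2) := by ring
        _ = σ i ^ 2 := by rw [hunit i]; ring
    -- sums
    have hfsplit : ∀ i ∈ Finset.univ.erase k,
        f i = (if ε i = 1 then σ i else 0) * (x / a) +
              (if ε i = 1 then 0 else σ i) * ((-M - x) / b) := by
      intro i hi
      have hik : i ≠ k := (Finset.mem_erase.mp hi).1
      simp only [hfdef, hpdef, if_neg hik]
      split <;> ring
    have hgsplit : ∀ i ∈ Finset.univ.erase k,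
        g i = (if ε i = 1 then σ i else 0) * (y / a) +
              (if ε i = 1 then 0 else σ i) * (-y / b) := by
      intro i hi
      have hik : i ≠ k := (Finset.mem_erase.mp hi).1
      simp only [hgdef, hqdef, if_neg hik]
      split <;> ring
    have hdegcases : (a = 0 → b = M ∧ x = 0) ∧ (b = 0 → a = M ∧ x = -M) := by
      constructor
      · intro ha
        have hbM : b = M := by linarith [hdiff.1, hdiff.2]
        refine ⟨hbM, ?_⟩
        rw [hxdef, ha, hbM]
        rw [show (M:ℝ) ^ 2 - 0 ^ 2 - M ^ 2 = 0 by ring, zero_div]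
      · intro hb
        have haM : a = M := by linarith [hdiff.1, hdiff.2]
        refine ⟨haM, ?_⟩
        rw [hxdef, hb, haM]
        field_simp
        ring
    have hfsum : ∑ i, f i = 0 := by
      rw [← Finset.add_sum_erase Finset.univ f (Finset.mem_univ k)]
      have hfk : f k = M := by simp [hfdef, hpdef, hMdef]
      rw [hfk, Finset.sum_congr rfl hfsplit, Finset.sum_add_distrib,
        ← Finset.sum_mul, ← Finset.sum_mul, ← hadef, ← hbdef]
      rcases eq_or_ne a 0 with ha | ha
      · obtain ⟨hbM, hx0⟩ := hdegcases.1 ha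
        rw [ha, hbM, hx0]
        field_simp
        ring
      · rcases eq_or_ne b 0 with hb | hb
        · obtain ⟨haM, hxM⟩ := hdegcases.2 hb
          rw [hb, haM, hxM]
          field_simp
          ring
        · field_simp
          ring
    have hgsum : ∑ i, g i = 0 := by
      rw [← Finset.add_sum_erase Finset.univ g (Finset.mem_univ k)]
      have hgk : g k = 0 := by simp [hgdef, hqdef]
      rw [hgk, Finset.sum_congr rfl hgsplit, Finset.sum_add_distrib,
        ← Finset.sum_mul, ← Finset.sum_mul, ← hadef, ← hbdef]
      rcases eq_or_ne a 0 with ha | ha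
      · obtain ⟨hbM, hx0⟩ := hdegcases.1 ha
        have hy0 : y = 0 := by
          rw [hydef, ha, hx0]; simp
        rw [ha, hy0]
        simp
      · rcases eq_or_ne b 0 with hb | hb
        · obtain ⟨haM, hxM⟩ := hdegcases.2 hb
          have hy0 : y = 0 := by
            rw [hydef, haM, hxM]; simp
          rw [hb, hy0]
          simp
        · field_simp
          ring
    -- build the matrix
    have quad2 : ∀ v : Fin n → ℝ,
        ∑ i, v i * ∑ j, (f i * f j + g i * g j) * v j
          = (∑ i, v i * f i) ^ 2 + (∑ i, v i * g i) ^ 2 := by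
      intro v
      rw [← my_quad n v f, ← my_quad n v g, ← Finset.sum_add_distrib]
      apply Finset.sum_congr rfl; intro i _
      rw [← mul_add, ← Finset.sum_add_distrib]
      congr 1
      apply Finset.sum_congr rfl; intro j _
      ring
    have quad3 : ∑ i, ∑ j, (f i * f j + g i * g j)
        = (∑ i, f i) ^ 2 + (∑ i, g i) ^ 2 := by
      rw [sq, sq, Finset.sum_mul_sum, Finset.sum_mul_sum, ← Finset.sum_add_distrib]
      apply Finset.sum_congr rfl; intro i _
      rw [← Finset.sum_add_distrib]
    refine ⟨Matrix.of (fun i j => f i * f j + g i * g j), ?_, Matrix.PosSemidef.of_dotProduct_mulVec_nonneg ?_ ?_, ?_, ?_⟩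
    · ext i j
      simp only [Matrix.transpose_apply, Matrix.of_apply]
      ring
    · ext i j
      simp only [Matrix.conjTranspose_apply, Matrix.of_apply, star_trivial]
      ring
    · intro v
      have hsv : star v = v := by funext l; exact star_trivial _
      rw [hsv]
      calc (0:ℝ) ≤ (∑ i, v i * f i) ^ 2 + (∑ i, v i * g i) ^ 2 := by positivity
        _ = ∑ i, v i * ∑ j, (f i * f j + g i * g j) * v j := (quad2 v).symm
        _ = dotProduct v ((Matrix.of (fun i j => f i * f j + g i * g j)) *ᵥ v) := rfl
    · intro i
      show f i * f i + g i * g i = σ i ^ 2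
      have h := hnormsq i
      rw [← h]; ring
    · show ∑ i, ∑ j, (f i * f j + g i * g j) = 0
      rw [quad3, hfsum, hgsum]
      norm_num
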